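/- Let b ∈ ℝ with b ≠ 0, c > 0, x0 ≥ 0, and let q be a natural number with q ≥ 1. Then the differential entropy of the IF1 distribution, -∫_{x0}^∞ f(x)·ln(f(x)) dx with f(x) = (|b|q/c)·((x-x0)/c)^(b-1)·(1 + ((x-x0)/c)^b)^(-q-1), equals -ln(|b|q/c) + ((b-1)/b)·H_{q-1} + (q+1)/q, where H_{q-1} = Σ_{k=1}^{q-1} 1/k. -/

import Mathlib

open MeasureTheory Real Set Filter Topology

/-- `(1+t)^(-n)` as inverse of natural power. -/
noncomputable def ifP (n : ℕ) (t : ℝ) : ℝ := ((1 + t) ^ n)⁻¹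

lemma ifP_hasDerivAt (n : ℕ) {t : ℝ} (ht : (0:ℝ) < 1 + t) :
    HasDerivAt (ifP (n+1)) (-(n+1) * ifP (n+2) t) t := by
  have h1 : HasDerivAt (fun t : ℝ => (1 + t) ^ (n+1)) ((n+1) * (1+t) ^ n) t := by
    have := ((hasDerivAt_id t).const_add 1).fun_pow (n+1)
    simpa using this
  have h2 := h1.fun_inv (by positivity)
  refine h2.congr_deriv ?_
  have hne : (1 + t) ≠ 0 := ht.ne'
  simp only [ifP]; field_simp
  ring

lemma ifP_cont (n : ℕ) : ContinuousOn (ifP n) (Ici 0) := by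
  apply ContinuousOn.inv₀ (by fun_prop)
  intro x hx
  have : (0:ℝ) < 1 + x := by simp at hx; linarith
  positivity

lemma ifP_tendsto_atTop (n : ℕ) : Tendsto (ifP (n+1)) atTop (𝓝 0) := by
  apply Tendsto.inv_tendsto_atTop
  exact (tendsto_pow_atTop (Nat.succ_ne_zero n)).comp (tendsto_atTop_add_const_left _ 1 tendsto_id)

lemma ifP_nonneg (n : ℕ) {t : ℝ} (ht : 0 ≤ t) : 0 ≤ ifP n t := by
  have h : (0:ℝ) < 1 + t := by linarith
  unfold ifP; positivity

-- key partial fraction identity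
lemma ifP_key (n : ℕ) {t : ℝ} (ht : 0 < t) :
    (1 - ifP n t) * (t⁻¹ - (1+t)⁻¹) = ∑ k ∈ Finset.range n, ifP (k+2) t := by
  induction n with
  | zero => simp [ifP]
  | succ m ih =>
    rw [Finset.sum_range_succ, ← ih]
    have h1 : (1:ℝ) + t ≠ 0 := by positivity
    have h2 : t ≠ 0 := ht.ne'
    simp only [ifP]
    field_simp
    ring

lemma ifP_zero (n : ℕ) : ifP n 0 = 1 := by simp [ifP]

lemma psi0_spec (m : ℕ) :
    IntegrableOn (ifP (m+2)) (Set.Ioi 0) ∧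
      ∫ t in Ioi 0, ifP (m+2) t = 1/(m+1) := by
  set F0 : ℝ → ℝ := fun t => -(ifP (m+1) t)/(m+1) with hF0
  have hderiv : ∀ t ∈ Ici (0:ℝ), HasDerivAt F0 (ifP (m+2) t) t := by
    intro t ht
    have h1 : (0:ℝ) < 1 + t := by simp at ht; linarith
    have := ((ifP_hasDerivAt m h1).fun_neg).div_const ((m:ℝ)+1)
    refine this.congr_deriv ?_
    have : ((m:ℝ)+1) ≠ 0 := by positivity
    field_simp
  have hpos : ∀ t ∈ Ioi (0:ℝ), 0 ≤ ifP (m+2) t := fun t ht => ifP_nonneg _ (le_of_lt ht)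
  have htop : Tendsto F0 atTop (𝓝 0) := by
    have := (ifP_tendsto_atTop m).neg.div_const ((m:ℝ)+1)
    simpa using this
  refine ⟨integrableOn_Ioi_deriv_of_nonneg' hderiv hpos htop, ?_⟩
  rw [integral_Ioi_of_hasDerivAt_of_nonneg' hderiv hpos htop]
  simp [hF0, ifP_zero]
  ring

lemma log_div_pow_tendsto (n : ℕ) (hn : 0 < n) :
    Tendsto (fun t : ℝ => ifP n t * log (1+t)) atTop (𝓝 0) := by
  have h1 : Tendsto (fun w : ℝ => log w / w ^ (n:ℝ)) atTop (𝓝 0) :=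
    (isLittleO_log_rpow_atTop (by positivity : (0:ℝ) < (n:ℝ))).tendsto_div_nhds_zero
  have h2 : Tendsto (fun t : ℝ => (1:ℝ) + t) atTop atTop :=
    tendsto_atTop_add_const_left _ 1 tendsto_id
  have h3 := h1.comp h2
  apply h3.congr'
  filter_upwards [eventually_gt_atTop (0:ℝ)] with t ht
  have h4 : (0:ℝ) < 1 + t := by linarith
  simp only [Function.comp, ifP]
  rw [rpow_natCast]
  ring

lemma psi1_spec (m : ℕ) :
    IntegrableOn (fun t => ifP (m+2) t * log (1+t)) (Set.Ioi 0) ∧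
      ∫ t in Ioi 0, ifP (m+2) t * log (1+t) = 1/((m:ℝ)+1)^2 := by
  set F1 : ℝ → ℝ := fun t =>
    -(ifP (m+1) t) * (log (1+t)/((m:ℝ)+1) + 1/((m:ℝ)+1)^2) with hF1
  have hm : ((m:ℝ)+1) ≠ 0 := by positivity
  have hderiv : ∀ t ∈ Ici (0:ℝ), HasDerivAt F1 (ifP (m+2) t * log (1+t)) t := by
    intro t ht
    have h1 : (0:ℝ) < 1 + t := by simp at ht; linarith
    have hlog : HasDerivAt (fun t : ℝ => log (1+t)) ((1+t)⁻¹) t := by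
      simpa using ((hasDerivAt_id t).const_add 1).log h1.ne'
    have hin : HasDerivAt (fun t : ℝ => log (1+t)/((m:ℝ)+1) + 1/((m:ℝ)+1)^2)
        ((1+t)⁻¹/((m:ℝ)+1)) t := (hlog.div_const _).add_const _
    have := ((ifP_hasDerivAt m h1).fun_neg).fun_mul hin
    refine this.congr_deriv ?_
    have he : ifP (m+1) t * (1+t)⁻¹ = ifP (m+2) t := by
      simp only [ifP, pow_succ, mul_inv]
    simp only [ifP] at *
    field_simp
    ring
  have hpos : ∀ t ∈ Ioi (0:ℝ), 0 ≤ ifP (m+2) t * log (1+t) := by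
    intro t ht
    have h1 : (0:ℝ) ≤ t := le_of_lt ht
    have : (0:ℝ) ≤ log (1+t) := log_nonneg (by linarith)
    exact mul_nonneg (ifP_nonneg _ h1) this
  have htop : Tendsto F1 atTop (𝓝 0) := by
    have h2 := ((log_div_pow_tendsto (m+1) (Nat.succ_pos m)).div_const ((m:ℝ)+1)).add
      ((ifP_tendsto_atTop m).mul_const (1/((m:ℝ)+1)^2))
    have h3 := h2.neg
    simp only [zero_div, zero_mul, add_zero, zero_add, neg_zero] at h3
    apply h3.congr
    intro t
    simp [hF1]
    ring
  refine ⟨integrableOn_Ioi_deriv_of_nonneg' hderiv hpos htop, ?_⟩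
  rw [integral_Ioi_of_hasDerivAt_of_nonneg' hderiv hpos htop]
  simp [hF1, ifP_zero]

lemma ifP_continuousAt_zero (n : ℕ) : ContinuousAt (ifP n) 0 := by
  apply ContinuousAt.inv₀ (by fun_prop)
  norm_num

noncomputable def ifS (m : ℕ) (t : ℝ) : ℝ :=
  ∑ k ∈ Finset.range (m+1), ifP (k+1) t / ((k:ℝ)+1)

noncomputable def ifFL (m : ℕ) (t : ℝ) : ℝ :=
  if t ≤ 0 then (∑ k ∈ Finset.range (m+1), 1/((k:ℝ)+1)) / ((m:ℝ)+1)
  else (-(ifP (m+1) t) * (log t - log (1+t)) + (log t - log (1+t)) + ifS m t) / ((m:ℝ)+1)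

set_option maxHeartbeats 2000000 in
lemma psiL_spec (m : ℕ) :
    IntegrableOn (fun t => ifP (m+2) t * (log t - log (1+t))) (Set.Ioi 0) ∧
      ∫ t in Ioi 0, ifP (m+2) t * (log t - log (1+t)) =
        -(∑ k ∈ Finset.range (m+1), 1/((k:ℝ)+1)) / ((m:ℝ)+1) := by
  have hm : ((m:ℝ)+1) ≠ 0 := by positivity
  -- derivative on Ioi 0
  have hderiv : ∀ t ∈ Ioi (0:ℝ), HasDerivAt (ifFL m) (ifP (m+2) t * (log t - log (1+t))) t := by
    intro t ht
    have ht : (0:ℝ) < t := ht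
    have h1 : (0:ℝ) < 1 + t := by linarith
    have hlog1p : HasDerivAt (fun t : ℝ => log (1+t)) ((1+t)⁻¹) t := by
      simpa using ((hasDerivAt_id t).const_add 1).log h1.ne'
    have hL : HasDerivAt (fun t : ℝ => log t - log (1+t)) (t⁻¹ - (1+t)⁻¹) t :=
      (Real.hasDerivAt_log ht.ne').sub hlog1p
    have hS : HasDerivAt (ifS m) (∑ k ∈ Finset.range (m+1), -(ifP (k+2) t)) t := by
      apply HasDerivAt.fun_sum
      intro k _
      have := (ifP_hasDerivAt k h1).div_const ((k:ℝ)+1)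
      refine this.congr_deriv ?_
      have hk : ((k:ℝ)+1) ≠ 0 := by positivity
      field_simp
    have hmain := ((((ifP_hasDerivAt m h1).fun_neg.fun_mul hL).fun_add hL).fun_add hS).div_const ((m:ℝ)+1)
    have heq : ifFL m =ᶠ[𝓝 t] fun t =>
        (-(ifP (m+1) t) * (log t - log (1+t)) + (log t - log (1+t)) + ifS m t) / ((m:ℝ)+1) := by
      filter_upwards [lt_mem_nhds ht] with s hs
      simp [ifFL, not_le.mpr hs]
    refine HasDerivAt.congr_of_eventuallyEq ?_ heq
    refine hmain.congr_deriv ?_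
    have key := ifP_key (m+1) ht
    rw [Finset.sum_neg_distrib, ← key]
    field_simp
    ring
  have hneg : ∀ t ∈ Ioi (0:ℝ), ifP (m+2) t * (log t - log (1+t)) ≤ 0 := by
    intro t ht
    have ht : (0:ℝ) < t := ht
    apply mul_nonpos_of_nonneg_of_nonpos (ifP_nonneg _ ht.le)
    have : log t ≤ log (1+t) := Real.log_le_log ht (by linarith)
    linarith
  -- limit at infinity
  have hLlim : Tendsto (fun t : ℝ => log t - log (1+t)) atTop (𝓝 0) := by
    have h2 : Tendsto (fun t : ℝ => 1 - (1+t)⁻¹) atTop (𝓝 1) := by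
      have hplus : Tendsto (fun t : ℝ => 1 + t) atTop atTop :=
        tendsto_atTop_add_const_left _ 1 tendsto_id
      have := (tendsto_inv_atTop_zero.comp hplus).const_sub 1
      simpa using this
    have h3 : Tendsto (fun t : ℝ => log (1 - (1+t)⁻¹)) atTop (𝓝 0) := by
      have := (Real.continuousAt_log one_ne_zero).tendsto.comp h2
      simpa [Function.comp_def] using this
    apply h3.congr'
    filter_upwards [eventually_gt_atTop (0:ℝ)] with t ht
    have h1 : (0:ℝ) < 1 + t := by linarith
    rw [show 1 - (1+t)⁻¹ = t / (1+t) by field_simp; ring, Real.log_div ht.ne' h1.ne']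
  have hSlim : Tendsto (ifS m) atTop (𝓝 0) := by
    have : Tendsto (fun t => ∑ k ∈ Finset.range (m+1), ifP (k+1) t / ((k:ℝ)+1)) atTop
        (𝓝 (∑ k ∈ Finset.range (m+1), 0)) := by
      apply tendsto_finset_sum
      intro k _
      simpa using (ifP_tendsto_atTop k).div_const ((k:ℝ)+1)
    unfold ifS; simpa using this
  have htop : Tendsto (ifFL m) atTop (𝓝 0) := by
    have h4 := ((((ifP_tendsto_atTop m).neg.mul hLlim).add hLlim).add hSlim).div_const ((m:ℝ)+1)
    simp only [neg_zero, zero_mul, add_zero, zero_add, zero_div] at h4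
    apply h4.congr'
    filter_upwards [eventually_gt_atTop (0:ℝ)] with t ht
    simp [ifFL, not_le.mpr ht]
  -- continuity at 0 from the right
  have hcont : ContinuousWithinAt (ifFL m) (Ici 0) 0 := by
    have hsplit : (Ici (0:ℝ)) = {0} ∪ Ioi 0 := by
      ext x; simp [le_iff_lt_or_eq, eq_comm, or_comm]
    unfold ContinuousWithinAt
    rw [hsplit, nhdsWithin_union, nhdsWithin_singleton]
    rw [tendsto_sup]
    constructor
    · exact tendsto_pure_nhds _ _
    · -- limit from the right
      have hval : ifFL m 0 = (∑ k ∈ Finset.range (m+1), 1/((k:ℝ)+1)) / ((m:ℝ)+1) := by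
        simp [ifFL]
      rw [hval]
      have htL : Tendsto (fun t : ℝ => t * (log t - log (1+t))) (𝓝[>] 0) (𝓝 0) := by
        have h5 : Tendsto (fun t : ℝ => log t * t) (𝓝[>] 0) (𝓝 0) := by
          have := tendsto_log_mul_rpow_nhdsGT_zero zero_lt_one
          simpa [rpow_one] using this
        have h6 : Tendsto (fun t : ℝ => t * log (1+t)) (𝓝[>] 0) (𝓝 0) := by
          have hc : ContinuousAt (fun t : ℝ => t * log (1+t)) 0 := by
            apply continuousAt_id.mul
            exact (Real.continuousAt_log (by norm_num)).comp (by fun_prop)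
          have := hc.tendsto.mono_left (nhdsWithin_le_nhds (s := Ioi (0:ℝ)))
          simpa using this
        have := h5.sub h6
        simp only [sub_zero, zero_sub, neg_zero] at this
        apply this.congr
        intro t; ring
      have hGP : Tendsto (fun t : ℝ => (∑ j ∈ Finset.range (m+1), (1+t)^j) * ifP (m+1) t)
          (𝓝[>] 0) (𝓝 ((m:ℝ)+1)) := by
        have hc : ContinuousAt (fun t : ℝ => (∑ j ∈ Finset.range (m+1), (1+t)^j) * ifP (m+1) t) 0 := by
          apply ContinuousAt.mul (by fun_prop) (ifP_continuousAt_zero (m+1))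
        have := hc.tendsto.mono_left (nhdsWithin_le_nhds (s := Ioi (0:ℝ)))
        simpa [ifP_zero] using this
      have hprod : Tendsto (fun t : ℝ => (1 - ifP (m+1) t) * (log t - log (1+t)))
          (𝓝[>] 0) (𝓝 0) := by
        have h7 := htL.mul hGP
        simp only [zero_mul] at h7
        apply h7.congr'
        filter_upwards [self_mem_nhdsWithin] with t (ht : (0:ℝ) < t)
        have h1 : (0:ℝ) < 1 + t := by linarith
        have hgeo := geom_sum_mul (1+t) (m+1)
        simp only [add_sub_cancel_left] at hgeo
        have : 1 - ifP (m+1) t = t * ((∑ j ∈ Finset.range (m+1), (1+t)^j) * ifP (m+1) t) := by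
          have hne : ((1:ℝ)+t)^(m+1) ≠ 0 := by positivity
          rw [ifP]
          field_simp
          linarith [hgeo]
        rw [this]
        ring
      have hS0 : Tendsto (ifS m) (𝓝[>] 0) (𝓝 (∑ k ∈ Finset.range (m+1), 1/((k:ℝ)+1))) := by
        unfold ifS
        apply tendsto_finset_sum
        intro k _
        have hc := ((ifP_continuousAt_zero (k+1)).div_const ((k:ℝ)+1)).tendsto.mono_left
          (nhdsWithin_le_nhds (s := Ioi (0:ℝ)))
        simpa [ifP_zero] using hc
      have h8 := (hprod.add hS0).div_const ((m:ℝ)+1)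
      simp only [zero_add] at h8
      apply h8.congr'
      filter_upwards [self_mem_nhdsWithin] with t (ht : (0:ℝ) < t)
      simp only [ifFL, not_le.mpr ht, if_false]
      ring_nf
  refine ⟨integrableOn_Ioi_deriv_of_nonpos hcont hderiv hneg htop, ?_⟩
  rw [integral_Ioi_of_hasDerivAt_of_nonpos hcont hderiv hneg htop]
  simp [ifFL]
  ring


set_option maxHeartbeats 1000000 in
/-- The differential entropy of the IF1 distribution with integer tail-weight
parameter `q ≥ 1`. -/
theorem if1_entropy (b c x0 : ℝ) (q : ℕ) (hb : b ≠ 0) (hc : 0 < c) (hq : 1 ≤ q)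
    (hx0 : 0 ≤ x0)
    (f : ℝ → ℝ)
    (hf : ∀ x, f x =
      |b| * (q : ℝ) / c * ((x - x0) / c) ^ (b - 1) *
        (1 + ((x - x0) / c) ^ b) ^ (-(q : ℝ) - 1)) :
    -∫ x in Set.Ioi x0, f x * Real.log (f x) =
      -Real.log (|b| * (q : ℝ) / c) +
        (b - 1) / b * (∑ k ∈ Finset.range (q - 1), (1 : ℝ) / (k + 1)) +
        ((q : ℝ) + 1) / (q : ℝ) := by
  obtain ⟨m, rfl⟩ : ∃ m, q = m + 1 := ⟨q - 1, (Nat.succ_pred_eq_of_pos hq).symm⟩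
  have hm : ((m:ℝ)+1) ≠ 0 := by positivity
  have hbpos : 0 < |b| := abs_pos.mpr hb
  set A : ℝ := |b| * ((m+1 : ℕ) : ℝ) / c with hA
  have hApos : 0 < A := by
    rw [hA]; push_cast; positivity
  set β : ℝ := (b-1)/b with hβ
  set g : ℝ → ℝ := fun t => (((m:ℝ)+1)/c) * (ifP (m+2) t *
      (Real.log A + β * Real.log t - ((m:ℝ)+2) * Real.log (1+t))) with hg
  set G : ℝ → ℝ := fun v => f (c * v + x0) * Real.log (f (c * v + x0)) with hG
  -- Step 1: shift
  have step1 : ∫ x in Ioi x0, f x * Real.log (f x)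
      = ∫ u in Ioi 0, f (u + x0) * Real.log (f (u + x0)) := by
    rw [← (measurePreserving_add_right volume x0).setIntegral_preimage_emb
      (measurableEmbedding_addRight x0) (fun x => f x * Real.log (f x)) (Ioi x0),
      preimage_add_const_Ioi, sub_self]
  -- Step 2: scale
  have step2 : ∫ u in Ioi 0, f (u + x0) * Real.log (f (u + x0)) = c * ∫ v in Ioi 0, G v := by
    have h1 : ∀ u : ℝ, f (u + x0) * Real.log (f (u + x0)) = G (u * c⁻¹) := by
      intro u
      simp only [hG]
      rw [mul_comm c (u * c⁻¹), mul_assoc, inv_mul_cancel₀ hc.ne', mul_one]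
    simp_rw [h1]
    rw [integral_comp_mul_right_Ioi G 0 (inv_pos.mpr hc)]
    simp [smul_eq_mul, inv_inv, hc.ne']
  -- Step 3: rpow substitution
  have step3 : ∫ v in Ioi 0, G v = ∫ t in Ioi 0, g t := by
    rw [← integral_comp_rpow_Ioi g hb]
    apply setIntegral_congr_fun measurableSet_Ioi
    intro v hv
    have hv : (0:ℝ) < v := hv
    have hvb : (0:ℝ) < v ^ b := rpow_pos_of_pos hv b
    have h1t : (0:ℝ) < 1 + v ^ b := by linarith
    have hvb1 : (0:ℝ) < v ^ (b-1) := rpow_pos_of_pos hv _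
    have hfv : f (c * v + x0) =
        A * v ^ (b-1) * (1 + v ^ b) ^ (-((m+1:ℕ) : ℝ) - 1) := by
      rw [hf]
      rw [show c * v + x0 - x0 = c * v by ring, mul_comm c v, mul_div_assoc,
        div_self hc.ne', mul_one]
    have hrpow_pow : (1 + v ^ b) ^ (-((m+1:ℕ) : ℝ) - 1) = ifP (m+2) (v ^ b) := by
      rw [show -((m+1:ℕ) : ℝ) - 1 = -(((m+2:ℕ) : ℕ) : ℝ) by push_cast; ring,
        Real.rpow_neg h1t.le, Real.rpow_natCast]
      rfl
    have hifPpos : 0 < ifP (m+2) (v ^ b) := by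
      rw [ifP]; positivity
    have hfpos : 0 < f (c * v + x0) := by
      rw [hfv, hrpow_pow]; positivity
    have hlog : Real.log (f (c * v + x0)) =
        Real.log A + (b-1) * Real.log v + (-((m+1:ℕ) : ℝ) - 1) * Real.log (1 + v ^ b) := by
      rw [hfv, Real.log_mul (by positivity) (by positivity),
        Real.log_mul hApos.ne' hvb1.ne', Real.log_rpow hv, Real.log_rpow h1t]
    simp only [hG, hg, smul_eq_mul]
    rw [hlog, hfv, hrpow_pow, Real.log_rpow hv, hβ, hA]
    push_cast
    field_simp
    ring
  -- Step 4: evaluate the t-integral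
  have h0 := psi0_spec m
  have h1 := psi1_spec m
  have hL := psiL_spec m
  set Hq : ℝ := ∑ k ∈ Finset.range (m+1), 1/((k:ℝ)+1) with hHq
  have step4 : ∫ t in Ioi 0, g t =
      (((m:ℝ)+1)/c) * (Real.log A * (1/((m:ℝ)+1)) + β * (-Hq/((m:ℝ)+1))
        + (β - ((m:ℝ)+2)) * (1/((m:ℝ)+1)^2)) := by
    have hcongr : ∀ t : ℝ, g t = (((m:ℝ)+1)/c) *
        (Real.log A * ifP (m+2) t + β * (ifP (m+2) t * (Real.log t - Real.log (1+t)))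
          + (β - ((m:ℝ)+2)) * (ifP (m+2) t * Real.log (1+t))) := by
      intro t; simp only [hg]; ring
    simp_rw [hcongr]
    rw [MeasureTheory.integral_const_mul]
    congr 1
    have i0 : Integrable (fun a => Real.log A * ifP (m+2) a) (volume.restrict (Ioi 0)) :=
      h0.1.const_mul _
    have iL : Integrable (fun a => β * (ifP (m+2) a * (Real.log a - Real.log (1+a))))
        (volume.restrict (Ioi 0)) := hL.1.const_mul _
    have i1 : Integrable (fun a => (β - ((m:ℝ)+2)) * (ifP (m+2) a * Real.log (1+a)))
        (volume.restrict (Ioi 0)) := h1.1.const_mul _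
    have iAB : Integrable (fun a => Real.log A * ifP (m+2) a
        + β * (ifP (m+2) a * (Real.log a - Real.log (1+a)))) (volume.restrict (Ioi 0)) :=
      i0.add iL
    rw [integral_add iAB i1, integral_add i0 iL,
      MeasureTheory.integral_const_mul, MeasureTheory.integral_const_mul,
      MeasureTheory.integral_const_mul, h0.2, h1.2, hL.2]
  rw [step1, step2, step3, step4]
  have hsum : Hq = (∑ k ∈ Finset.range m, (1:ℝ)/((k:ℝ)+1)) + 1/((m:ℝ)+1) := by
    rw [hHq, Finset.sum_range_succ]
  simp only [Nat.add_sub_cancel]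
  rw [hsum, hA]
  push_cast
  field_simp
  ring
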